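/- Let N be a finite set and let B be a family of equi-cardinal subsets of N. Then B is connected if and only if for any distinct X, Y ∈ B there exist distinct elements i_1, …, i_m ∈ X \ Y and distinct elements j_1, …, j_m ∈ Y \ X, where m = |X \ Y| = |Y \ X|, such that Y ∪ {i_1, …, i_k} \ {j_1, …, j_k} ∈ B for every k = 1, 2, …, m. -/
import Mathlib


open Finset

private lemma aux_stepwise {N : Type*} [DecidableEq N] (B : Set (Finset N))
    (hconn : ∀ X ∈ B, ∀ Y ∈ B, X ≠ Y →
      ∃ i ∈ X \ Y, ∃ j ∈ Y \ X, (insert i Y).erase j ∈ B) :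
    ∀ m : ℕ, ∀ X ∈ B, ∀ Y ∈ B, X ≠ Y → (X \ Y).card = m →
      ∃ i j : ℕ → N, Set.InjOn i (Set.Iio m) ∧ Set.InjOn j (Set.Iio m) ∧
        (∀ k < m, i k ∈ X \ Y) ∧ (∀ k < m, j k ∈ Y \ X) ∧
        ∀ k < m, (Y ∪ (Finset.range (k+1)).image i) \ ((Finset.range (k+1)).image j) ∈ B := by
  intro m
  induction m with
  | zero =>
    intro X hX Y hY hne hcard
    have hXY : X \ Y = ∅ := Finset.card_eq_zero.mp hcard
    have hYX : (Y \ X).Nonempty := by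
      by_contra h
      rw [Finset.not_nonempty_iff_eq_empty] at h
      exact hne (Finset.Subset.antisymm (Finset.sdiff_eq_empty_iff_subset.mp hXY)
        (Finset.sdiff_eq_empty_iff_subset.mp h))
    obtain ⟨y, -⟩ := hYX
    refine ⟨fun _ => y, fun _ => y, ?_, ?_, ?_, ?_, ?_⟩ <;>
      first
        | (intro a ha; simp at ha)
        | (intro a ha b hb _; simp at ha)
  | succ m ih =>
    intro X hX Y hY hne hcard
    obtain ⟨i₀, hi₀, j₀, hj₀, hY'⟩ := hconn X hX Y hY hne
    obtain ⟨hi₀X, hi₀Y⟩ := Finset.mem_sdiff.mp hi₀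
    obtain ⟨hj₀Y, hj₀X⟩ := Finset.mem_sdiff.mp hj₀
    set Y' := (insert i₀ Y).erase j₀ with hY'def
    have hXY' : X \ Y' = (X \ Y).erase i₀ := by
      ext a
      simp only [hY'def, Finset.mem_sdiff, Finset.mem_erase, Finset.mem_insert]
      constructor
      · rintro ⟨haX, h⟩
        have haj : a ≠ j₀ := fun h => hj₀X (h ▸ haX)
        push_neg at h
        obtain ⟨h1, h2⟩ := h haj
        exact ⟨h1, haX, h2⟩
      · rintro ⟨hne, haX, haY⟩
        refine ⟨haX, ?_⟩
        rintro ⟨-, (rfl | h)⟩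
        · exact hne rfl
        · exact haY h
    have hY'X : Y' \ X = (Y \ X).erase j₀ := by
      ext a
      simp only [hY'def, Finset.mem_sdiff, Finset.mem_erase, Finset.mem_insert]
      constructor
      · rintro ⟨⟨haj, (rfl | haY)⟩, haX⟩
        · exact absurd hi₀X haX
        · exact ⟨haj, haY, haX⟩
      · rintro ⟨haj, haY, haX⟩
        exact ⟨⟨haj, Or.inr haY⟩, haX⟩
    have hcard' : (X \ Y').card = m := by
      rw [hXY', Finset.card_erase_of_mem hi₀, hcard]; omega
    have hkey0 : (Y ∪ (Finset.range 1).image (fun k : ℕ => Nat.casesOn k i₀ (fun _ => i₀)))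
        = Y ∪ {i₀} := by simp
    by_cases hXeq : X = Y'
    · -- then m = 0
      have hm0 : m = 0 := by
        rw [← hcard', hXeq]; simp
      subst hm0
      refine ⟨fun _ => i₀, fun _ => j₀, ?_, ?_, ?_, ?_, ?_⟩
      · intro a ha b hb _; simp at ha hb; omega
      · intro a ha b hb _; simp at ha hb; omega
      · intro k hk; exact hi₀
      · intro k hk; exact hj₀
      · intro k hk
        interval_cases k
        have h1 : (Finset.range 1).image (fun _ : ℕ => i₀) = {i₀} := by simp
        have h2 : (Finset.range 1).image (fun _ : ℕ => j₀) = {j₀} := by simp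
        rw [h1, h2, Finset.union_comm, ← Finset.insert_eq, ← Finset.erase_eq]
        exact hY'
    · have hY'B : Y' ∈ B := hY'
      obtain ⟨i', j', hinji', hinjj', hi', hj', hchain'⟩ := ih X hX Y' hY'B hXeq hcard'
      refine ⟨fun k => Nat.casesOn k i₀ (fun t => i' t),
              fun k => Nat.casesOn k j₀ (fun t => j' t), ?_, ?_, ?_, ?_, ?_⟩
      · intro a ha b hb hab
        simp only [Set.mem_Iio] at ha hb
        match a, b with
        | 0, 0 => rfl
        | 0, b+1 =>
          exfalso
          have := hi' b (by omega)
          rw [hXY'] at this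
          exact (Finset.mem_erase.mp this).1 hab.symm
        | a+1, 0 =>
          exfalso
          have := hi' a (by omega)
          rw [hXY'] at this
          exact (Finset.mem_erase.mp this).1 hab
        | a+1, b+1 =>
          have := hinji' (Set.mem_Iio.mpr (by omega : a < m))
            (Set.mem_Iio.mpr (by omega : b < m)) hab
          omega
      · intro a ha b hb hab
        simp only [Set.mem_Iio] at ha hb
        match a, b with
        | 0, 0 => rfl
        | 0, b+1 =>
          exfalso
          have := hj' b (by omega)
          rw [hY'X] at this
          exact (Finset.mem_erase.mp this).1 hab.symm
        | a+1, 0 =>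
          exfalso
          have := hj' a (by omega)
          rw [hY'X] at this
          exact (Finset.mem_erase.mp this).1 hab
        | a+1, b+1 =>
          have := hinjj' (Set.mem_Iio.mpr (by omega : a < m))
            (Set.mem_Iio.mpr (by omega : b < m)) hab
          omega
      · intro k hk
        match k with
        | 0 => exact hi₀
        | t+1 =>
          have := hi' t (by omega)
          rw [hXY'] at this
          exact Finset.mem_of_mem_erase this
      · intro k hk
        match k with
        | 0 => exact hj₀
        | t+1 =>
          have := hj' t (by omega)
          rw [hY'X] at this
          exact Finset.mem_of_mem_erase this
      · intro k hk
        match k with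
        | 0 =>
          have h1 : (Finset.range 1).image (fun k : ℕ => Nat.casesOn k i₀ (fun t => i' t))
              = {i₀} := by simp
          have h2 : (Finset.range 1).image (fun k : ℕ => Nat.casesOn k j₀ (fun t => j' t))
              = {j₀} := by simp
          rw [h1, h2, Finset.union_comm, ← Finset.insert_eq, ← Finset.erase_eq]
          exact hY'
        | s+1 =>
          have hs : s < m := by omega
          set I' := (Finset.range (s+1)).image i' with hI'def
          set J' := (Finset.range (s+1)).image j' with hJ'def
          have hI : (Finset.range (s+2)).image (fun k : ℕ => Nat.casesOn k i₀ (fun t => i' t))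
              = insert i₀ I' := by
            ext a
            simp only [hI'def, Finset.mem_image, Finset.mem_range, Finset.mem_insert]
            constructor
            · rintro ⟨t, ht, rfl⟩
              match t with
              | 0 => exact Or.inl rfl
              | t+1 => exact Or.inr ⟨t, by omega, rfl⟩
            · rintro (rfl | ⟨t, ht, rfl⟩)
              · exact ⟨0, by omega, rfl⟩
              · exact ⟨t+1, by omega, rfl⟩
          have hJ : (Finset.range (s+2)).image (fun k : ℕ => Nat.casesOn k j₀ (fun t => j' t))
              = insert j₀ J' := by
            ext a
            simp only [hJ'def, Finset.mem_image, Finset.mem_range, Finset.mem_insert]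
            constructor
            · rintro ⟨t, ht, rfl⟩
              match t with
              | 0 => exact Or.inl rfl
              | t+1 => exact Or.inr ⟨t, by omega, rfl⟩
            · rintro (rfl | ⟨t, ht, rfl⟩)
              · exact ⟨0, by omega, rfl⟩
              · exact ⟨t+1, by omega, rfl⟩
          have hjI' : j₀ ∉ I' := by
            rw [hI'def]
            simp only [Finset.mem_image, Finset.mem_range]
            rintro ⟨t, ht, hte⟩
            have h5 := hi' t (by omega)
            rw [hXY'] at h5
            exact hj₀X (hte ▸ (Finset.mem_sdiff.mp (Finset.mem_of_mem_erase h5)).1)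
          have key : (Y ∪ insert i₀ I') \ insert j₀ J' = (Y' ∪ I') \ J' := by
            ext a
            by_cases haj : a = j₀
            · subst haj
              simp [hY'def, hjI']
            · simp only [hY'def, Finset.mem_sdiff, Finset.mem_union, Finset.mem_insert,
                Finset.mem_erase]
              constructor
              · rintro ⟨h1, h2⟩
                push_neg at h2
                refine ⟨?_, h2.2⟩
                rcases h1 with h | h | h
                · exact Or.inl ⟨haj, Or.inr h⟩
                · exact Or.inl ⟨haj, Or.inl h⟩
                · exact Or.inr h
              · rintro ⟨h1, h2⟩
                refine ⟨?_, ?_⟩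
                · rcases h1 with ⟨-, (rfl | h)⟩ | h
                  · exact Or.inr (Or.inl rfl)
                  · exact Or.inl h
                  · exact Or.inr (Or.inr h)
                · push_neg
                  exact ⟨haj, h2⟩
          rw [hI, hJ, key]
          exact hchain' s hs

/-- A family `B` of equi-cardinal subsets of a finite set `N` is connected
(for any distinct `X, Y ∈ B` there are `i ∈ X \ Y`, `j ∈ Y \ X` with
`Y + i - j ∈ B`) iff for any distinct `X, Y ∈ B` there are distinct
`i_1, …, i_m ∈ X \ Y` and distinct `j_1, …, j_m ∈ Y \ X`, where
`m = |X \ Y| = |Y \ X|`, such that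
`Y ∪ {i_1, …, i_k} \ {j_1, …, j_k} ∈ B` for every `k = 1, …, m`. -/
theorem connected_iff_stepwise_exchange
    {N : Type*} [Fintype N] [DecidableEq N]
    (B : Set (Finset N))
    (hequi : ∀ X ∈ B, ∀ Y ∈ B, X.card = Y.card) :
    (∀ X ∈ B, ∀ Y ∈ B, X ≠ Y →
        ∃ i ∈ X \ Y, ∃ j ∈ Y \ X, (insert i Y).erase j ∈ B)
    ↔
    (∀ X ∈ B, ∀ Y ∈ B, X ≠ Y →
        ∃ i : Fin ((X \ Y).card) → N, ∃ j : Fin ((X \ Y).card) → N,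
          Function.Injective i ∧ Function.Injective j ∧
          (∀ k, i k ∈ X \ Y) ∧ (∀ k, j k ∈ Y \ X) ∧
          ∀ k : Fin ((X \ Y).card),
            (Y ∪ ((Finset.univ.filter (fun l => l ≤ k)).image i)) \
              ((Finset.univ.filter (fun l => l ≤ k)).image j) ∈ B) := by
  constructor
  · intro hconn X hX Y hY hne
    obtain ⟨i, j, hinji, hinjj, hi, hj, hchain⟩ :=
      aux_stepwise B hconn ((X \ Y).card) X hX Y hY hne rfl
    refine ⟨fun k => i k.val, fun k => j k.val, ?_, ?_, ?_, ?_, ?_⟩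
    · intro a b hab
      exact Fin.ext (hinji (Set.mem_Iio.mpr a.isLt) (Set.mem_Iio.mpr b.isLt) hab)
    · intro a b hab
      exact Fin.ext (hinjj (Set.mem_Iio.mpr a.isLt) (Set.mem_Iio.mpr b.isLt) hab)
    · intro k; exact hi k.val k.isLt
    · intro k; exact hj k.val k.isLt
    · intro k
      have himg : ∀ f : ℕ → N,
          ((Finset.univ.filter (fun l : Fin ((X \ Y).card) => l ≤ k)).image
            (fun l => f l.val)) = (Finset.range (k.val + 1)).image f := by
        intro f
        ext a
        simp only [Finset.mem_image, Finset.mem_filter, Finset.mem_univ, true_and,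
          Finset.mem_range]
        constructor
        · rintro ⟨l, hl, rfl⟩
          exact ⟨l.val, by have := Fin.le_def.mp hl; omega, rfl⟩
        · rintro ⟨t, ht, rfl⟩
          exact ⟨⟨t, by have := k.isLt; omega⟩, by rw [Fin.le_def]; simpa using by omega, rfl⟩
      rw [himg i, himg j]
      exact hchain k.val k.isLt
  · intro h X hX Y hY hne
    have hm : 0 < (X \ Y).card := by
      rcases Nat.eq_zero_or_pos (X \ Y).card with h0 | h0
      · exfalso
        have hsub : X ⊆ Y := Finset.sdiff_eq_empty_iff_subset.mp (Finset.card_eq_zero.mp h0)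
        exact hne (Finset.eq_of_subset_of_card_le hsub (le_of_eq (hequi Y hY X hX)))
      · exact h0
    obtain ⟨i, j, hinji, hinjj, hi, hj, hchain⟩ := h X hX Y hY hne
    set k0 : Fin ((X \ Y).card) := ⟨0, hm⟩ with hk0
    refine ⟨i k0, hi k0, j k0, hj k0, ?_⟩
    have hfil : (Finset.univ.filter (fun l : Fin ((X \ Y).card) => l ≤ k0)) = {k0} := by
      ext l
      simp only [Finset.mem_filter, Finset.mem_univ, true_and, Finset.mem_singleton]
      rw [Fin.le_def, Fin.ext_iff]
      simp [hk0]
    have := hchain k0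
    rw [hfil, Finset.image_singleton, Finset.image_singleton, Finset.union_comm,
      ← Finset.insert_eq, ← Finset.erase_eq] at this
    exact this
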